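/- Let (X,d) be a metric space and {x_n}_{n≥0} a sequence in X with d(x_n, x_{n+1}) → 0 as n → ∞. Suppose that for every ε > 0 there exists a sequence {ν_n} of nonnegative integers such that for any two subsequences {x_{p_n}} and {x_{q_n}} (given by strictly increasing index maps n ↦ p_n and n ↦ q_n), if limsup_{n→∞} d(x_{p_n}, x_{q_n}) ≤ ε then there exists N such that d(x_{p_n+ν_n}, x_{q_n+ν_n}) ≤ ε for all n ≥ N. Then {x_n} is a Cauchy sequence. -/

import Mathlib

open Filter

/-- Lemma 2.1 (technical lemma): a criterion for a sequence in a metric space to be Cauchy. -/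
theorem stmt0 {X : Type*} [MetricSpace X] (x : ℕ → X)
    (hd : Tendsto (fun n => dist (x n) (x (n + 1))) atTop (nhds 0))
    (h : ∀ ε : ℝ, 0 < ε → ∃ ν : ℕ → ℕ,
      ∀ p q : ℕ → ℕ, StrictMono p → StrictMono q →
        limsup (fun n => dist (x (p n)) (x (q n))) atTop ≤ ε →
        ∃ N : ℕ, ∀ n ≥ N, dist (x (p n + ν n)) (x (q n + ν n)) ≤ ε) :
    CauchySeq x := by
  classical
  by_contra hC
  rw [Metric.cauchySeq_iff] at hC
  push_neg at hC
  obtain ⟨ε₀, hε₀, hnc⟩ := hC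
  set ε : ℝ := ε₀ / 3 with hεdef
  have hε : 0 < ε := by positivity
  obtain ⟨ν, hν⟩ := h ε hε
  have key : ∀ n B : ℕ, ∃ a b : ℕ, B < a ∧ a < b ∧
      ε < dist (x (a + ν n)) (x (b + ν n)) ∧
      dist (x a) (x b) ≤ ε + 1 / (n + 1) := by
    intro n B
    set s : ℕ := ν n with hs
    have hδ : (0:ℝ) < 1 / (n + 1) := by positivity
    set η : ℝ := min (ε / (2 * s + 2)) ((1 / (n + 1)) / (2 * s + 1)) with hηdef
    have hη : 0 < η := by
      apply lt_min <;> positivity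
    have hη1 : (2 * (s:ℝ) + 2) * η ≤ ε := by
      have h1 : η ≤ ε / (2 * s + 2) := min_le_left _ _
      have hc : (0:ℝ) < 2 * s + 2 := by positivity
      calc (2 * (s:ℝ) + 2) * η ≤ (2 * (s:ℝ) + 2) * (ε / (2 * s + 2)) := by
            exact mul_le_mul_of_nonneg_left h1 (le_of_lt hc)
        _ = ε := by field_simp
    have hη2 : (2 * (s:ℝ) + 1) * η ≤ 1 / (n + 1) := by
      have h1 : η ≤ (1 / (n + 1)) / (2 * s + 1) := min_le_right _ _
      have hc : (0:ℝ) < 2 * s + 1 := by positivity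
      calc (2 * (s:ℝ) + 1) * η ≤ (2 * (s:ℝ) + 1) * ((1 / (n + 1)) / (2 * s + 1)) := by
            exact mul_le_mul_of_nonneg_left h1 (le_of_lt hc)
        _ = 1 / (n + 1) := by field_simp
    have hsη : 2 * (s:ℝ) * η < ε := by nlinarith
    obtain ⟨M, hM⟩ := eventually_atTop.mp (hd.eventually_lt_const hη)
    -- the shift estimate
    have hshift : ∀ a : ℕ, M ≤ a → dist (x a) (x (a + s)) ≤ s * η := by
      intro a ha
      calc dist (x a) (x (a + s))
          ≤ ∑ i ∈ Finset.range s, dist (x (a + i)) (x (a + i + 1)) :=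
            dist_le_range_sum_dist (fun i => x (a + i)) s
        _ ≤ ∑ _i ∈ Finset.range s, η := by
            apply Finset.sum_le_sum
            intro i _
            exact le_of_lt (hM (a + i) (le_trans ha (Nat.le_add_right _ _)))
        _ = s * η := by simp [mul_comm]
    obtain ⟨m₁, hm₁, m₂, hm₂, hdist⟩ := hnc (max (B + 1) M)
    have hne : m₁ ≠ m₂ := by
      rintro rfl
      simp at hdist
      linarith
    set u : ℕ := min m₁ m₂ with hu
    set v : ℕ := max m₁ m₂ with hv
    have huv : u < v := by
      rcases Nat.lt_or_ge m₁ m₂ with h' | h'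
      · simpa [hu, hv, min_eq_left h'.le, max_eq_right h'.le] using h'
      · have h'' : m₂ < m₁ := lt_of_le_of_ne h' (Ne.symm hne)
        simpa [hu, hv, min_eq_right h''.le, max_eq_left h''.le] using h''
    have huN : max (B + 1) M ≤ u := le_min hm₁ hm₂
    have hduv : 3 * ε ≤ dist (x u) (x v) := by
      have : dist (x u) (x v) = dist (x m₁) (x m₂) := by
        rcases Nat.le_total m₁ m₂ with h' | h'
        · simp [hu, hv, min_eq_left h', max_eq_right h']
        · simp [hu, hv, min_eq_right h', max_eq_left h', dist_comm]
      rw [this]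
      calc 3 * ε = ε₀ := by rw [hεdef]; ring
        _ ≤ _ := hdist
    have hex : ∃ k, u < k ∧ ε + 2 * s * η < dist (x u) (x k) := by
      refine ⟨v, huv, ?_⟩
      calc ε + 2 * (s:ℝ) * η < ε + ε := by linarith
        _ < 3 * ε := by linarith
        _ ≤ _ := hduv
    set b : ℕ := Nat.find hex with hbdef
    obtain ⟨hub, hbig⟩ : u < b ∧ ε + 2 * s * η < dist (x u) (x b) := Nat.find_spec hex
    have hb1 : dist (x u) (x (b - 1)) ≤ ε + 2 * s * η := by
      rcases Nat.lt_or_ge u (b - 1) with h' | h'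
      · have hlt : b - 1 < b := by omega
        have := Nat.find_min hex hlt
        push_neg at this
        exact this h'
      · have : b - 1 = u := le_antisymm h' (Nat.le_sub_one_of_lt hub)
        rw [this]
        simp
        positivity
    have hbM : M ≤ b - 1 := by
      have : M ≤ u := le_trans (le_max_right _ _) huN
      omega
    have hb2 : dist (x u) (x b) ≤ ε + 2 * s * η + η := by
      have hstep : dist (x (b - 1)) (x b) < η := by
        have := hM (b - 1) hbM
        have heq : b - 1 + 1 = b := by omega
        rwa [heq] at this
      calc dist (x u) (x b) ≤ dist (x u) (x (b - 1)) + dist (x (b - 1)) (x b) :=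
            dist_triangle _ _ _
        _ ≤ ε + 2 * s * η + η := by linarith
    have hMu : M ≤ u := le_trans (le_max_right _ _) huN
    have hMb : M ≤ b := le_trans hMu hub.le
    have hshifted : ε < dist (x (u + s)) (x (b + s)) := by
      have h1 : dist (x u) (x (u + s)) ≤ s * η := hshift u hMu
      have h2 : dist (x b) (x (b + s)) ≤ s * η := hshift b hMb
      have h3 : dist (x u) (x b) ≤ dist (x u) (x (u + s)) + dist (x (u + s)) (x (b + s)) +
          dist (x (b + s)) (x b) := dist_triangle4 _ _ _ _
      have h4 : dist (x (b + s)) (x b) = dist (x b) (x (b + s)) := dist_comm _ _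
      nlinarith
    refine ⟨u, b, ?_, hub, hshifted, ?_⟩
    · exact lt_of_lt_of_le (Nat.lt_of_lt_of_le (Nat.lt_succ_self B) (le_max_left _ _)) huN
    · linarith
  choose a b hBa hab hsh hle using key
  set g : ℕ → ℕ × ℕ := fun n => Nat.rec (a 0 0, b 0 0)
    (fun k ih => (a (k + 1) (max ih.1 ih.2), b (k + 1) (max ih.1 ih.2))) n with hg
  set p : ℕ → ℕ := fun n => (g n).1 with hp
  set q : ℕ → ℕ := fun n => (g n).2 with hq
  have hall : ∀ n, ε < dist (x (p n + ν n)) (x (q n + ν n)) ∧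
      dist (x (p n)) (x (q n)) ≤ ε + 1 / (n + 1) := by
    intro n
    cases n with
    | zero => exact ⟨hsh 0 0, hle 0 0⟩
    | succ k => exact ⟨hsh (k + 1) _, hle (k + 1) _⟩
  have hstep : ∀ n, max (p n) (q n) < p (n + 1) ∧ p (n + 1) < q (n + 1) := by
    intro n
    exact ⟨hBa (n + 1) _, hab (n + 1) _⟩
  have hpm : StrictMono p := by
    apply strictMono_nat_of_lt_succ
    intro n
    exact lt_of_le_of_lt (le_max_left _ _) (hstep n).1
  have hqm : StrictMono q := by
    apply strictMono_nat_of_lt_succ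
    intro n
    exact lt_of_le_of_lt (le_max_right _ _) (lt_trans (hstep n).1 (hstep n).2)
  have hlim : Tendsto (fun n : ℕ => ε + 1 / ((n:ℝ) + 1)) atTop (nhds ε) := by
    have := tendsto_one_div_add_atTop_nhds_zero_nat (𝕜 := ℝ)
    simpa using tendsto_const_nhds.add this
  have hls : limsup (fun n => dist (x (p n)) (x (q n))) atTop ≤ ε := by
    have hcb : IsCoboundedUnder (· ≤ ·) atTop (fun n => dist (x (p n)) (x (q n))) :=
      isCoboundedUnder_le_of_le atTop (x := 0) fun n => dist_nonneg
    have hbd : IsBoundedUnder (· ≤ ·) atTop (fun n : ℕ => ε + 1 / ((n:ℝ) + 1)) :=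
      hlim.isBoundedUnder_le
    calc limsup (fun n => dist (x (p n)) (x (q n))) atTop
        ≤ limsup (fun n : ℕ => ε + 1 / ((n:ℝ) + 1)) atTop :=
          limsup_le_limsup (Eventually.of_forall fun n => (hall n).2) hcb hbd
      _ = ε := hlim.limsup_eq
  obtain ⟨N, hN⟩ := hν p q hpm hqm hls
  have := hN N le_rfl
  have := (hall N).1
  linarith
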